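/- Call a word standard if it has the form x₁^{a₁}x₂^{b₁}⋯x₁^{a_m}x₂^{b_m} with m ≥ 1 and a₁,…,a_m,b₁,…,b_m ≥ 1. Let S be any set containing exactly one standard word from each non-singleton rotation orbit (the singleton orbits are exactly those of the powers x_i^a, i ∈ {1,2}, a ≥ 0, and every non-singleton orbit contains a standard word). Let (T̃_i)_{i≥1} and (Ũ_i)_{i≥1} be any families of polynomials in ℂ[X] with deg T̃_i = deg Ũ_i = i for every i ≥ 1. For a standard word x = x₁^{a₁}x₂^{b₁}⋯x₁^{a_m}x₂^{b_m} set Ũ^x = Ũ_{a₁}(x₁)Ũ_{b₁}(x₂)⋯Ũ_{a_m}(x₁)Ũ_{b_m}(x₂) ∈ ℂ⟨x₁,x₂⟩. Then the family Ξ = {1} ∪ {T̃_a(x_i) : a ≥ 1, i ∈ {1,2}} ∪ {Ũ^x : x ∈ S} is linearly independent, and its linear span 𝓙 satisfies 𝓘 + 𝓙 = ℂ⟨x₁,x₂⟩ and 𝓘 ∩ 𝓙 = {0}. -/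

import Mathlib

/- STATEMENT 2 (Lemma 2.4): With S a set containing exactly one standard word from each
non-singleton rotation orbit, and families (T̃_i), (Ũ_i) of polynomials with deg T̃_i =
deg Ũ_i = i, the family Ξ = {1} ∪ {T̃_a(x_i)} ∪ {Ũ^x : x ∈ S} is linearly independent and
its span 𝓙 satisfies 𝓘 + 𝓙 = ℂ⟨x₁,x₂⟩ and 𝓘 ∩ 𝓙 = {0}. -/

noncomputable section

abbrev FreeCAlg : Type := MonoidAlgebra ℂ (FreeMonoid (Fin 2))

instance : DecidableEq (FreeMonoid (Fin 2)) := FreeMonoid.toList.decidableEq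

/-- Rotation of a word, iterated `n` times. -/
def rotWord (n : ℕ) (w : FreeMonoid (Fin 2)) : FreeMonoid (Fin 2) :=
  FreeMonoid.ofList ((FreeMonoid.toList w).rotate n)

/-- Two words lie in the same rotation orbit. -/
def SameOrbit (w w' : FreeMonoid (Fin 2)) : Prop := ∃ n : ℕ, rotWord n w = w'

/-- The commutator subspace 𝓘. -/
def commutatorSubspace : Submodule ℂ FreeCAlg :=
  Submodule.span ℂ {y : FreeCAlg | ∃ P Q : FreeCAlg, y = P * Q - Q * P}

/-- The generators x₁ (i = 0) and x₂ (i = 1) of ℂ⟨x₁,x₂⟩. -/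
def Xgen (i : Fin 2) : FreeCAlg :=
  MonoidAlgebra.of ℂ (FreeMonoid (Fin 2)) (FreeMonoid.of i)

/-- A list [(a₁,b₁),…,(a_m,b_m)] of exponents is standard if it is nonempty and all
exponents are ≥ 1. -/
def IsStandardList (L : List (ℕ × ℕ)) : Prop :=
  L ≠ [] ∧ ∀ p ∈ L, 1 ≤ p.1 ∧ 1 ≤ p.2

/-- The word x₁^{a₁}x₂^{b₁}⋯x₁^{a_m}x₂^{b_m} encoded by a list of exponents. -/
def wordOf (L : List (ℕ × ℕ)) : FreeMonoid (Fin 2) :=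
  (L.map (fun p => FreeMonoid.of (0 : Fin 2) ^ p.1 * FreeMonoid.of (1 : Fin 2) ^ p.2)).prod

/-- A word is standard if it is of the form x₁^{a₁}x₂^{b₁}⋯x₁^{a_m}x₂^{b_m} with m ≥ 1 and
all exponents ≥ 1. -/
def IsStandardWord (w : FreeMonoid (Fin 2)) : Prop :=
  ∃ L : List (ℕ × ℕ), IsStandardList L ∧ wordOf L = w

/-- Ũ^x = Ũ_{a₁}(x₁)Ũ_{b₁}(x₂)⋯Ũ_{a_m}(x₁)Ũ_{b_m}(x₂) for the standard word encoded by `L`. -/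
def Uhat (U : ℕ → Polynomial ℂ) (L : List (ℕ × ℕ)) : FreeCAlg :=
  (L.map (fun p => Polynomial.aeval (Xgen 0) (U p.1) * Polynomial.aeval (Xgen 1) (U p.2))).prod

-- ==================== AUX ====================

namespace Lemma24

open MonoidAlgebra

abbrev W := FreeMonoid (Fin 2)

lemma toList_rotWord (n : ℕ) (w : W) : (rotWord n w).toList = w.toList.rotate n := rfl

lemma rotWord_zero (w : W) : rotWord 0 w = w := by
  apply FreeMonoid.toList.injective
  simp [toList_rotWord]

lemma rotWord_rotWord (m n : ℕ) (w : W) : rotWord m (rotWord n w) = rotWord (n + m) w := by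
  apply FreeMonoid.toList.injective
  simp [toList_rotWord, List.rotate_rotate]

lemma sameOrbit_refl (w : W) : SameOrbit w w := ⟨0, rotWord_zero w⟩

lemma sameOrbit_trans {a b c : W} : SameOrbit a b → SameOrbit b c → SameOrbit a c := by
  rintro ⟨n, rfl⟩ ⟨m, rfl⟩
  exact ⟨n + m, (rotWord_rotWord m n a).symm⟩

lemma length_rotWord (n : ℕ) (w : W) : (rotWord n w).length = w.length := by
  show (w.toList.rotate n).length = w.toList.length
  simp

lemma sameOrbit_symm {a b : W} : SameOrbit a b → SameOrbit b a := by
  rintro ⟨n, rfl⟩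
  rcases Nat.eq_zero_or_pos a.length with h | h
  · have : a.toList = [] := List.length_eq_zero_iff.mp h
    refine ⟨0, ?_⟩
    apply FreeMonoid.toList.injective
    simp [toList_rotWord, this]
  · refine ⟨a.length * (n + 1) - n, ?_⟩
    apply FreeMonoid.toList.injective
    have hle : n ≤ a.length * (n + 1) := by nlinarith
    rw [toList_rotWord, toList_rotWord, List.rotate_rotate]
    rw [Nat.add_sub_cancel' hle]
    exact List.rotate_length_mul a.toList (n + 1)

lemma comm_mem (P Q : FreeCAlg) : P * Q - Q * P ∈ commutatorSubspace :=
  Submodule.subset_span ⟨P, Q, rfl⟩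

lemma single_sub_rotOne_mem (w : W) (c : ℂ) :
    single w c - single (rotWord 1 w) c ∈ commutatorSubspace := by
  rcases h : w.toList with _ | ⟨i, t⟩
  · have hw : w = 1 := by
      apply FreeMonoid.toList.injective; simpa using h
    have : rotWord 1 w = w := by
      apply FreeMonoid.toList.injective
      simp [toList_rotWord, h, hw]
    rw [this, sub_self]
    exact Submodule.zero_mem _
  · have hw : w = FreeMonoid.ofList [i] * FreeMonoid.ofList t := by
      apply FreeMonoid.toList.injective
      simpa using h
    have hrot : rotWord 1 w = FreeMonoid.ofList t * FreeMonoid.ofList [i] := by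
      apply FreeMonoid.toList.injective
      rw [toList_rotWord, h, List.rotate_cons_succ, List.rotate_zero]
      rfl
    have h1 : single w c =
        single (FreeMonoid.ofList [i]) c * single (FreeMonoid.ofList t) (1 : ℂ) := by
      rw [MonoidAlgebra.single_mul_single, mul_one, hw]
    have h2 : single (rotWord 1 w) c =
        single (FreeMonoid.ofList t) (1 : ℂ) * single (FreeMonoid.ofList [i]) c := by
      rw [MonoidAlgebra.single_mul_single, one_mul, hrot]
    rw [h1, h2]
    exact comm_mem _ _

lemma single_sub_rot_mem (n : ℕ) (w : W) (c : ℂ) :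
    single w c - single (rotWord n w) c ∈ commutatorSubspace := by
  induction n with
  | zero => rw [rotWord_zero, sub_self]; exact Submodule.zero_mem _
  | succ n ih =>
      have h1 : rotWord (n + 1) w = rotWord 1 (rotWord n w) := by
        rw [rotWord_rotWord]
      rw [h1, ← sub_add_sub_cancel (single w c) (single (rotWord n w) c)
        (single (rotWord 1 (rotWord n w)) c)]
      exact Submodule.add_mem _ ih (single_sub_rotOne_mem (rotWord n w) c)

lemma rotWord_mul (u v : W) : rotWord u.length (u * v) = v * u := by
  apply FreeMonoid.toList.injective
  rw [toList_rotWord]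
  show (u.toList ++ v.toList).rotate u.toList.length = v.toList ++ u.toList
  rw [List.rotate_eq_drop_append_take (by simp), List.drop_left, List.take_left]

-- constant words
lemma eq_replicate_of_all_rot_fixed {w : W} (h : ∀ n, rotWord n w = w) :
    ∃ a : Fin 2, w.toList = List.replicate w.toList.length a := by
  have : ∀ n, w.toList.rotate n = w.toList := fun n => by
    rw [← toList_rotWord, h n]
  exact List.rotate_eq_self_iff_eq_replicate.mp this

section Rep

variable (S : Set W)
  (hS_rep : ∀ w : W, (∃ n, rotWord n w ≠ w) → ∃! w', w' ∈ S ∧ SameOrbit w w')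

open scoped Classical in
def rep (w : W) : W :=
  if h : ∃ n, rotWord n w ≠ w then (hS_rep w h).choose else w

variable {S}

lemma rep_eq_of_fixed {w : W} (h : ∀ n, rotWord n w = w) : rep S hS_rep w = w := by
  rw [rep, dif_neg]; push_neg; exact h

lemma rep_spec {w : W} (h : ∃ n, rotWord n w ≠ w) :
    rep S hS_rep w ∈ S ∧ SameOrbit w (rep S hS_rep w) := by
  rw [rep, dif_pos h]
  exact (hS_rep w h).choose_spec.1

lemma rep_unique {w : W} (h : ∃ n, rotWord n w ≠ w) {y : W}
    (hy : y ∈ S ∧ SameOrbit w y) : y = rep S hS_rep w := by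
  rw [rep, dif_pos h]
  exact (hS_rep w h).choose_spec.2 y hy

lemma sameOrbit_rep (w : W) : SameOrbit w (rep S hS_rep w) := by
  by_cases h : ∃ n, rotWord n w ≠ w
  · exact (rep_spec hS_rep h).2
  · push_neg at h
    rw [rep_eq_of_fixed hS_rep h]
    exact sameOrbit_refl w

lemma length_rep (w : W) : (rep S hS_rep w).length = w.length := by
  obtain ⟨n, hn⟩ := sameOrbit_rep hS_rep w
  rw [← hn, length_rotWord]

lemma rep_eq_of_sameOrbit {a b : W} (h : SameOrbit a b) :
    rep S hS_rep a = rep S hS_rep b := by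
  by_cases ha : ∃ n, rotWord n a ≠ a
  · have hb : ∃ n, rotWord n b ≠ b := by
      by_contra hb
      push_neg at hb
      obtain ⟨m, hm⟩ := sameOrbit_symm h
      obtain ⟨n, hn⟩ := ha
      apply hn
      have hab : a = b := by rw [← hm, hb m]
      rw [hab, hb n]
    have : rep S hS_rep b ∈ S ∧ SameOrbit a (rep S hS_rep b) :=
      ⟨(rep_spec hS_rep hb).1, sameOrbit_trans h (rep_spec hS_rep hb).2⟩
    exact (rep_unique hS_rep ha this).symm
  · push_neg at ha
    obtain ⟨n, hn⟩ := h
    rw [ha n] at hn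
    subst hn
    rfl

lemma rep_mul_comm (u v : W) : rep S hS_rep (u * v) = rep S hS_rep (v * u) :=
  rep_eq_of_sameOrbit hS_rep ⟨u.length, rotWord_mul u v⟩

def Phi : FreeCAlg →ₗ[ℂ] FreeCAlg := MonoidAlgebra.mapDomainLinearMap ℂ ℂ (rep S hS_rep)

lemma Phi_single (w : W) (c : ℂ) :
    Phi hS_rep (single w c) = single (rep S hS_rep w) c :=
  MonoidAlgebra.mapDomainLinearMap_single ..

lemma Phi_mul_comm (P Q : FreeCAlg) : Phi hS_rep (P * Q) = Phi hS_rep (Q * P) := by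
  induction P using MonoidAlgebra.induction_linear with
  | zero => simp
  | add f g hf hg => rw [add_mul, mul_add, map_add, map_add, hf, hg]
  | single u b =>
      induction Q using MonoidAlgebra.induction_linear with
      | zero => simp
      | add f g hf hg => rw [mul_add, add_mul, map_add, map_add, hf, hg]
      | single v d =>
          rw [MonoidAlgebra.single_mul_single, MonoidAlgebra.single_mul_single,
            Phi_single, Phi_single, rep_mul_comm hS_rep, mul_comm]

lemma I_le_ker : commutatorSubspace ≤ LinearMap.ker (Phi hS_rep) := by
  rw [commutatorSubspace, Submodule.span_le]
  rintro y ⟨P, Q, rfl⟩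
  simp only [SetLike.mem_coe, LinearMap.mem_ker, map_sub, Phi_mul_comm hS_rep P Q, sub_self]

lemma sub_Phi_mem (x : FreeCAlg) : x - Phi hS_rep x ∈ commutatorSubspace := by
  induction x using MonoidAlgebra.induction_linear with
  | zero =>
      rw [map_zero, sub_zero]
      exact Submodule.zero_mem _
  | add f g hf hg =>
      rw [map_add, add_sub_add_comm]
      exact Submodule.add_mem _ hf hg
  | single w c =>
      rw [Phi_single]
      obtain ⟨n, hn⟩ := sameOrbit_rep hS_rep w
      rw [← hn]
      exact single_sub_rot_mem n w c

end Rep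

-- ==================== length filtration ====================

def SuppLt (n : ℕ) (x : FreeCAlg) : Prop := ∀ v : W, n ≤ v.length → x.coeff v = 0

def IsLead (x : FreeCAlg) (w : W) (c : ℂ) : Prop :=
  ∃ y : FreeCAlg, x = single w c + y ∧ SuppLt w.length y

lemma suppLt_zero (n : ℕ) : SuppLt n (0 : FreeCAlg) := fun v _ => rfl

lemma suppLt_add {n : ℕ} {x y : FreeCAlg} (hx : SuppLt n x) (hy : SuppLt n y) :
    SuppLt n (x + y) := fun v hv => by
  show (x + y).coeff v = 0
  rw [MonoidAlgebra.coeff_add, Finsupp.add_apply, hx v hv, hy v hv, add_zero]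

lemma suppLt_mono {m n : ℕ} (h : m ≤ n) {x : FreeCAlg} (hx : SuppLt m x) : SuppLt n x :=
  fun v hv => hx v (le_trans h hv)

lemma mem_support_len {x : FreeCAlg} {n : ℕ} (hx : SuppLt n x) {v : W}
    (hv : v ∈ x.coeff.support) : v.length < n := by
  by_contra h
  exact (Finsupp.mem_support_iff.mp hv) (hx v (le_of_not_gt h))

lemma suppLt_single {w : W} {c : ℂ} {n : ℕ} (h : w.length < n) : SuppLt n (single w c) := by
  intro v hv
  rw [MonoidAlgebra.coeff_single, Finsupp.single_apply, if_neg]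
  rintro rfl
  omega

lemma suppLt_mul_left {m n : ℕ} {x y : FreeCAlg} (hw : ∀ v ∈ x.coeff.support, (v : W).length ≤ m)
    (hy : SuppLt n y) : SuppLt (m + n) (x * y) := by
  intro v hv
  by_contra h
  have hv' : v ∈ (x * y).coeff.support := Finsupp.mem_support_iff.mpr h
  have := MonoidAlgebra.support_coeff_mul_subset x y hv'
  rw [Finset.mem_mul] at this
  obtain ⟨a, ha, b, hb, hab⟩ := this
  have h1 : a.length ≤ m := hw a ha
  have h2 : b.length < n := mem_support_len hy hb
  have : v.length = a.length + b.length := by rw [← hab]; simp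
  omega

lemma suppLt_mul_right {m n : ℕ} {x y : FreeCAlg} (hx : SuppLt m x)
    (hw : ∀ v ∈ y.coeff.support, (v : W).length ≤ n) : SuppLt (m + n) (x * y) := by
  intro v hv
  by_contra h
  have hv' : v ∈ (x * y).coeff.support := Finsupp.mem_support_iff.mpr h
  have := MonoidAlgebra.support_coeff_mul_subset x y hv'
  rw [Finset.mem_mul] at this
  obtain ⟨a, ha, b, hb, hab⟩ := this
  have h1 : a.length < m := mem_support_len hx ha
  have h2 : b.length ≤ n := hw b hb
  have : v.length = a.length + b.length := by rw [← hab]; simp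
  omega

lemma support_single_len {w : W} {c : ℂ} : ∀ v ∈ (single w c : FreeCAlg).coeff.support,
    (v : W).length ≤ w.length := by
  intro v hv
  rw [MonoidAlgebra.coeff_single] at hv
  have := Finsupp.support_single_subset hv
  simp only [Finset.mem_singleton] at this
  rw [this]

lemma isLead_mul {x x' : FreeCAlg} {u v : W} {c d : ℂ}
    (hx : IsLead x u c) (hx' : IsLead x' v d) : IsLead (x * x') (u * v) (c * d) := by
  obtain ⟨y, rfl, hy⟩ := hx
  obtain ⟨y', rfl, hy'⟩ := hx'
  refine ⟨single u c * y' + y * single v d + y * y', ?_, ?_⟩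
  · rw [← MonoidAlgebra.single_mul_single]; noncomm_ring
  · rw [FreeMonoid.length_mul]
    refine suppLt_add (suppLt_add ?_ ?_) ?_
    · exact suppLt_mul_left support_single_len hy'
    · exact suppLt_mul_right hy support_single_len
    · exact suppLt_mul_right hy (fun a ha => le_of_lt (mem_support_len hy' ha))

lemma isLead_single (w : W) (c : ℂ) : IsLead (single w c) w c :=
  ⟨0, by rw [add_zero], suppLt_zero _⟩

lemma length_of_pow (i : Fin 2) (k : ℕ) : (FreeMonoid.of i ^ k).length = k := by
  induction k with
  | zero => simp
  | succ k ih => rw [pow_succ, FreeMonoid.length_mul, ih, FreeMonoid.length_of]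

lemma toList_of_pow (i : Fin 2) (k : ℕ) :
    (FreeMonoid.of i ^ k).toList = List.replicate k i := by
  induction k with
  | zero => simp [FreeMonoid.toList_one]
  | succ k ih =>
      rw [pow_succ, FreeMonoid.toList_mul, ih, List.replicate_succ']
      rfl

lemma Xgen_pow (i : Fin 2) (k : ℕ) :
    (Xgen i) ^ k = single (FreeMonoid.of i ^ k) (1 : ℂ) := by
  rw [Xgen, MonoidAlgebra.of_apply, MonoidAlgebra.single_pow, one_pow]

lemma isLead_aeval (i : Fin 2) {p : Polynomial ℂ} {n : ℕ} (hn : 1 ≤ n)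
    (hp : p.natDegree = n) :
    IsLead (Polynomial.aeval (Xgen i) p) (FreeMonoid.of i ^ n) p.leadingCoeff := by
  have hp0 : p ≠ 0 := by
    intro h; rw [h, Polynomial.natDegree_zero] at hp; omega
  have haev : Polynomial.aeval (Xgen i) p =
      ∑ k ∈ Finset.range (n + 1), single (FreeMonoid.of i ^ k) (p.coeff k) := by
    rw [Polynomial.aeval_eq_sum_range' (lt_of_le_of_lt (le_of_eq hp) (Nat.lt_succ_self n))]
    refine Finset.sum_congr rfl fun k _ => ?_
    rw [Xgen_pow, MonoidAlgebra.smul_single', mul_one]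
  refine ⟨∑ k ∈ Finset.range n, single (FreeMonoid.of i ^ k) (p.coeff k), ?_, ?_⟩
  · rw [haev, Finset.sum_range_succ, add_comm]
    congr 1
    rw [Polynomial.leadingCoeff, hp]
  · rw [length_of_pow]
    intro v hv
    rw [MonoidAlgebra.coeff_sum, Finsupp.finset_sum_apply]
    refine Finset.sum_eq_zero fun k hk => ?_
    have hk' : k < n := Finset.mem_range.mp hk
    exact suppLt_single (by rw [length_of_pow]; omega) v hv

lemma wordOf_cons (p : ℕ × ℕ) (t : List (ℕ × ℕ)) :
    wordOf (p :: t) = (FreeMonoid.of (0 : Fin 2) ^ p.1 * FreeMonoid.of (1 : Fin 2) ^ p.2) *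
      wordOf t := by
  rw [wordOf, List.map_cons, List.prod_cons]; rfl

lemma Uhat_cons (U : ℕ → Polynomial ℂ) (p : ℕ × ℕ) (t : List (ℕ × ℕ)) :
    Uhat U (p :: t) = (Polynomial.aeval (Xgen 0) (U p.1) * Polynomial.aeval (Xgen 1) (U p.2)) *
      Uhat U t := by
  rw [Uhat, List.map_cons, List.prod_cons]; rfl

lemma isLead_Uhat (U : ℕ → Polynomial ℂ) (hU : ∀ i : ℕ, 1 ≤ i → (U i).natDegree = i)
    (L : List (ℕ × ℕ)) (hL : ∀ p ∈ L, 1 ≤ p.1 ∧ 1 ≤ p.2) :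
    ∃ c : ℂ, c ≠ 0 ∧ IsLead (Uhat U L) (wordOf L) c := by
  induction L with
  | nil =>
      refine ⟨1, one_ne_zero, ?_⟩
      have h1 : Uhat U [] = 1 := by rw [Uhat]; simp
      have h2 : wordOf [] = 1 := by rw [wordOf]; simp
      rw [h1, h2]
      exact ⟨0, by rw [add_zero]; exact MonoidAlgebra.one_def, suppLt_zero _⟩
  | cons p t ih =>
      obtain ⟨c, hc, hlead⟩ := ih (fun q hq => hL q (List.mem_cons_of_mem p hq))
      have h1 := hL p (List.mem_cons_self)
      have lead0 := isLead_aeval (0 : Fin 2) h1.1 (hU p.1 h1.1)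
      have lead1 := isLead_aeval (1 : Fin 2) h1.2 (hU p.2 h1.2)
      have hl0 : (U p.1).leadingCoeff ≠ 0 := by
        rw [Polynomial.leadingCoeff_ne_zero]
        intro h
        have hd := hU p.1 h1.1
        rw [h, Polynomial.natDegree_zero] at hd
        omega
      have hl1 : (U p.2).leadingCoeff ≠ 0 := by
        rw [Polynomial.leadingCoeff_ne_zero]
        intro h
        have hd := hU p.2 h1.2
        rw [h, Polynomial.natDegree_zero] at hd
        omega
      refine ⟨(U p.1).leadingCoeff * (U p.2).leadingCoeff * c,
        mul_ne_zero (mul_ne_zero hl0 hl1) hc, ?_⟩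
      rw [Uhat_cons, wordOf_cons]
      exact isLead_mul (isLead_mul lead0 lead1) hlead

-- ==================== injectivity of target words ====================

lemma replicate_blocks {x : Fin 2} :
    ∀ (a a' : ℕ) (r r' : List (Fin 2)), r.head? ≠ some x → r'.head? ≠ some x →
      List.replicate a x ++ r = List.replicate a' x ++ r' → a = a' ∧ r = r' := by
  intro a
  induction a with
  | zero =>
      intro a' r r' hr hr' h
      cases a' with
      | zero => simpa using h
      | succ a' =>
          exfalso
          rw [List.replicate_succ] at h
          simp only [List.replicate_zero, List.nil_append, List.cons_append] at h
          apply hr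
          rw [h]
          rfl
  | succ a ih =>
      intro a' r r' hr hr' h
      cases a' with
      | zero =>
          exfalso
          rw [List.replicate_succ] at h
          simp only [List.replicate_zero, List.nil_append, List.cons_append] at h
          apply hr'
          rw [← h]
          rfl
      | succ a' =>
          rw [List.replicate_succ, List.replicate_succ] at h
          simp only [List.cons_append, List.cons.injEq] at h
          obtain ⟨hae, hr2⟩ := ih a' r r' hr hr' h.2
          exact ⟨by omega, hr2⟩

lemma toList_wordOf_cons (a b : ℕ) (t : List (ℕ × ℕ)) :
    (wordOf ((a, b) :: t)).toList =
      List.replicate a 0 ++ (List.replicate b 1 ++ (wordOf t).toList) := by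
  rw [wordOf_cons]
  show (FreeMonoid.of (0:Fin 2) ^ a * FreeMonoid.of (1:Fin 2) ^ b * wordOf t).toList = _
  rw [FreeMonoid.toList_mul, FreeMonoid.toList_mul, toList_of_pow, toList_of_pow,
    List.append_assoc]

lemma head?_wordOf {t : List (ℕ × ℕ)} (ht : ∀ p ∈ t, 1 ≤ p.1 ∧ 1 ≤ p.2) (htne : t ≠ []) :
    ((wordOf t).toList).head? = some 0 := by
  cases t with
  | nil => exact absurd rfl htne
  | cons p t' =>
      obtain ⟨a, b⟩ := p
      rw [toList_wordOf_cons]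
      have h1 := (ht (a, b) (List.mem_cons_self)).1
      cases a with
      | zero => omega
      | succ a => rw [List.replicate_succ]; rfl

lemma wordOf_injOn :
    ∀ (L₁ L₂ : List (ℕ × ℕ)), (∀ p ∈ L₁, 1 ≤ p.1 ∧ 1 ≤ p.2) →
      (∀ p ∈ L₂, 1 ≤ p.1 ∧ 1 ≤ p.2) → wordOf L₁ = wordOf L₂ → L₁ = L₂ := by
  intro L₁
  induction L₁ with
  | nil =>
      intro L₂ _ hL₂ h
      cases L₂ with
      | nil => rfl
      | cons p t =>
          exfalso
          have h0 : (wordOf []).toList = [] := by rw [wordOf]; simp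
          have := head?_wordOf hL₂ (List.cons_ne_nil p t)
          rw [← h, h0] at this
          simp at this
  | cons p t ih =>
      intro L₂ hL₁ hL₂ h
      cases L₂ with
      | nil =>
          exfalso
          have h0 : (wordOf []).toList = [] := by rw [wordOf]; simp
          have := head?_wordOf hL₁ (List.cons_ne_nil p t)
          rw [h, h0] at this
          simp at this
      | cons q s =>
          obtain ⟨a, b⟩ := p
          obtain ⟨a', b'⟩ := q
          have hab := hL₁ (a, b) (List.mem_cons_self)
          have hab' := hL₂ (a', b') (List.mem_cons_self)
          have hlist : (wordOf ((a, b) :: t)).toList = (wordOf ((a', b') :: s)).toList := by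
            rw [h]
          rw [toList_wordOf_cons, toList_wordOf_cons] at hlist
          have hhead1 : (List.replicate b 1 ++ (wordOf t).toList).head? ≠ some 0 := by
            cases b with
            | zero => exact absurd hab.2 (by omega)
            | succ b0 =>
                rw [List.replicate_succ]
                simp only [List.cons_append, List.head?_cons]
                intro hcon
                have h10 : (1 : Fin 2) = 0 := by injection hcon
                exact one_ne_zero h10
          have hhead2 : (List.replicate b' 1 ++ (wordOf s).toList).head? ≠ some 0 := by
            cases b' with
            | zero => exact absurd hab'.2 (by omega)
            | succ b0 =>
                rw [List.replicate_succ]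
                simp only [List.cons_append, List.head?_cons]
                intro hcon
                have h10 : (1 : Fin 2) = 0 := by injection hcon
                exact one_ne_zero h10
          obtain ⟨ha, hrest⟩ := replicate_blocks a a' _ _ hhead1 hhead2 hlist
          have hheadt : ((wordOf t).toList).head? ≠ some 1 := by
            by_cases hte : t = []
            · subst hte
              have h0 : (wordOf []).toList = [] := by rw [wordOf]; simp
              rw [h0]; simp
            · rw [head?_wordOf (fun q hq => hL₁ q (List.mem_cons_of_mem _ hq)) hte]
              intro hcon
              exact zero_ne_one (by injection hcon)
          have hheads : ((wordOf s).toList).head? ≠ some 1 := by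
            by_cases hse : s = []
            · subst hse
              have h0 : (wordOf []).toList = [] := by rw [wordOf]; simp
              rw [h0]; simp
            · rw [head?_wordOf (fun q hq => hL₂ q (List.mem_cons_of_mem _ hq)) hse]
              intro hcon
              exact zero_ne_one (by injection hcon)
          obtain ⟨hb, hrest2⟩ := replicate_blocks b b' _ _ hheadt hheads hrest
          have hts : t = s := by
            apply ih _ (fun q hq => hL₁ q (List.mem_cons_of_mem _ hq))
              (fun q hq => hL₂ q (List.mem_cons_of_mem _ hq))
            exact FreeMonoid.toList.injective hrest2
          rw [ha, hb, hts]

lemma mem_toList_wordOf {L : List (ℕ × ℕ)} (hL : IsStandardList L) :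
    (0 : Fin 2) ∈ (wordOf L).toList ∧ (1 : Fin 2) ∈ (wordOf L).toList := by
  obtain ⟨hne, hall⟩ := hL
  cases L with
  | nil => exact absurd rfl hne
  | cons p t =>
      obtain ⟨a, b⟩ := p
      have h1 := hall (a, b) (List.mem_cons_self)
      rw [toList_wordOf_cons]
      constructor
      · apply List.mem_append_left
        exact List.mem_replicate.mpr ⟨by omega, rfl⟩
      · apply List.mem_append_right
        apply List.mem_append_left
        exact List.mem_replicate.mpr ⟨by omega, rfl⟩

-- the triangularity criterion for linear independence
lemma tri {ι : Type*} (v : ι → FreeCAlg) (wt : ι → W) (ct : ι → ℂ)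
    (hinj : Function.Injective wt) (hc : ∀ i, ct i ≠ 0)
    (hld : ∀ i, IsLead (v i) (wt i) (ct i)) : LinearIndependent ℂ v := by
  rw [linearIndependent_iff']
  intro s g hsum i hi
  by_contra hgi
  set t := s.filter (fun j => g j ≠ 0) with ht
  have hit : i ∈ t := Finset.mem_filter.mpr ⟨hi, hgi⟩
  obtain ⟨i₀, hi₀t, hmax⟩ := t.exists_max_image (fun j => (wt j).length) ⟨i, hit⟩
  have hi₀s : i₀ ∈ s := (Finset.mem_filter.mp hi₀t).1
  have hgi₀ : g i₀ ≠ 0 := (Finset.mem_filter.mp hi₀t).2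
  have happ : (∑ j ∈ s, g j • v j).coeff (wt i₀) = 0 := by rw [hsum]; rfl
  rw [MonoidAlgebra.coeff_sum, Finsupp.finset_sum_apply] at happ
  have heval : ∀ j ∈ s, j ≠ i₀ → (g j • v j).coeff (wt i₀) = 0 := by
    intro j hjs hji
    by_cases hgj : g j = 0
    · rw [hgj, zero_smul]; rfl
    · have hjt : j ∈ t := Finset.mem_filter.mpr ⟨hjs, hgj⟩
      have hlen : (wt j).length ≤ (wt i₀).length := hmax j hjt
      obtain ⟨y, hy, hylt⟩ := hld j
      rw [MonoidAlgebra.coeff_smul, Finsupp.smul_apply, hy, MonoidAlgebra.coeff_add,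
        Finsupp.add_apply, MonoidAlgebra.coeff_single, Finsupp.single_apply,
        if_neg (fun hcon => hji (hinj hcon)), hylt (wt i₀) hlen, add_zero, smul_zero]
  rw [Finset.sum_eq_single i₀ heval (fun h => absurd hi₀s h)] at happ
  obtain ⟨y, hy, hylt⟩ := hld i₀
  rw [MonoidAlgebra.coeff_smul, Finsupp.smul_apply, hy, MonoidAlgebra.coeff_add,
    Finsupp.add_apply, MonoidAlgebra.coeff_single, Finsupp.single_apply, if_pos rfl,
    hylt (wt i₀) le_rfl, add_zero, smul_eq_mul] at happ
  exact hgi₀ ((mul_eq_zero.mp happ).resolve_right (hc i₀))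

end Lemma24

-- ==================== main theorem ====================

open Lemma24 MonoidAlgebra in
theorem xi_linearIndependent_and_complement
    (S : Set (FreeMonoid (Fin 2)))
    (hS_std : ∀ w ∈ S, IsStandardWord w)
    (hS_rep : ∀ w : FreeMonoid (Fin 2), (∃ n, rotWord n w ≠ w) →
        ∃! w', w' ∈ S ∧ SameOrbit w w')
    (T U : ℕ → Polynomial ℂ)
    (hT : ∀ i : ℕ, 1 ≤ i → (T i).natDegree = i)
    (hU : ∀ i : ℕ, 1 ≤ i → (U i).natDegree = i) :
    -- the family Ξ, indexed by {1} ⊕ {pairs (a,i), a ≥ 1, i ∈ {1,2}} ⊕ {x ∈ S}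
    let Xi : Unit ⊕ ({a : ℕ // 1 ≤ a} × Fin 2) ⊕
        {L : List (ℕ × ℕ) // IsStandardList L ∧ wordOf L ∈ S} → FreeCAlg :=
      fun z => match z with
        | Sum.inl _ => 1
        | Sum.inr (Sum.inl (a, i)) => Polynomial.aeval (Xgen i) (T a.1)
        | Sum.inr (Sum.inr L) => Uhat U L.1
    LinearIndependent ℂ Xi ∧
    commutatorSubspace ⊔ Submodule.span ℂ (Set.range Xi) = (⊤ : Submodule ℂ FreeCAlg) ∧
    commutatorSubspace ⊓ Submodule.span ℂ (Set.range Xi) = (⊥ : Submodule ℂ FreeCAlg) := by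
  intro Xi
  classical
  let wt : Unit ⊕ ({a : ℕ // 1 ≤ a} × Fin 2) ⊕
      {L : List (ℕ × ℕ) // IsStandardList L ∧ wordOf L ∈ S} → W := fun z => match z with
    | Sum.inl _ => 1
    | Sum.inr (Sum.inl (a, i)) => FreeMonoid.of i ^ a.1
    | Sum.inr (Sum.inr L) => wordOf L.1
  -- leading coefficients
  have hexists : ∀ z, ∃ c : ℂ, c ≠ 0 ∧ IsLead (Xi z) (wt z) c := by
    rintro (⟨⟩ | ⟨⟨a, i⟩ | ⟨L, hLstd, hLS⟩⟩)
    · show ∃ c : ℂ, c ≠ 0 ∧ IsLead (1 : FreeCAlg) (1 : W) c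
      exact ⟨1, one_ne_zero,
        ⟨0, by rw [add_zero]; exact MonoidAlgebra.one_def, suppLt_zero _⟩⟩
    · show ∃ c : ℂ, c ≠ 0 ∧
        IsLead (Polynomial.aeval (Xgen i) (T a.1)) (FreeMonoid.of i ^ a.1) c
      refine ⟨(T a.1).leadingCoeff, ?_, ?_⟩
      · rw [Polynomial.leadingCoeff_ne_zero]
        intro h
        have hd := hT a.1 a.2
        rw [h, Polynomial.natDegree_zero] at hd
        have := a.2
        omega
      · exact isLead_aeval i a.2 (hT a.1 a.2)
    · show ∃ c : ℂ, c ≠ 0 ∧ IsLead (Uhat U L) (wordOf L) c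
      exact isLead_Uhat U hU L hLstd.2
  choose ct hct hld using hexists
  -- injectivity of target words
  have hinj : Function.Injective wt := by
    rintro (⟨⟩ | ⟨⟨a, i⟩ | ⟨L, hLstd, hLS⟩⟩) (⟨⟩ | ⟨⟨a', i'⟩ | ⟨L', hLstd', hLS'⟩⟩) h <;>
      simp only [wt] at h
    · rfl
    · exfalso
      have := congrArg FreeMonoid.length h
      rw [FreeMonoid.length_one, length_of_pow] at this
      have := a'.2
      omega
    · exfalso
      have h0 := (mem_toList_wordOf hLstd').1
      rw [← h, FreeMonoid.toList_one] at h0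
      exact List.not_mem_nil h0
    · exfalso
      have := congrArg FreeMonoid.length h
      rw [FreeMonoid.length_one, length_of_pow] at this
      have := a.2
      omega
    · have hl := congrArg FreeMonoid.length h
      rw [length_of_pow, length_of_pow] at hl
      have htl := congrArg FreeMonoid.toList h
      rw [toList_of_pow, toList_of_pow] at htl
      have hii : i = i' := by
        have hmem : i ∈ List.replicate a'.1 i' := by
          rw [← htl]
          exact List.mem_replicate.mpr ⟨by have := a.2; omega, rfl⟩
        exact List.eq_of_mem_replicate hmem
      subst hii
      have : a = a' := Subtype.ext hl
      subst this
      rfl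
    · exfalso
      have h0 := (mem_toList_wordOf hLstd').1
      have h1 := (mem_toList_wordOf hLstd').2
      rw [← h, toList_of_pow] at h0 h1
      have e0 := List.eq_of_mem_replicate h0
      have e1 := List.eq_of_mem_replicate h1
      rw [← e0] at e1
      exact one_ne_zero e1
    · exfalso
      have h0 := (mem_toList_wordOf hLstd).1
      rw [h, FreeMonoid.toList_one] at h0
      exact List.not_mem_nil h0
    · exfalso
      have h0 := (mem_toList_wordOf hLstd).1
      have h1 := (mem_toList_wordOf hLstd).2
      rw [h, toList_of_pow] at h0 h1
      have e0 := List.eq_of_mem_replicate h0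
      have e1 := List.eq_of_mem_replicate h1
      rw [← e0] at e1
      exact one_ne_zero e1
    · have : L = L' := wordOf_injOn L L' hLstd.2 hLstd'.2 h
      subst this
      rfl
  -- the representative words are fixed points of rep
  have hrepfix : ∀ z, rep S hS_rep (wt z) = wt z := by
    rintro (⟨⟩ | ⟨⟨a, i⟩ | ⟨L, hLstd, hLS⟩⟩)
    · apply rep_eq_of_fixed
      intro n
      apply FreeMonoid.toList.injective
      rw [toList_rotWord]
      show ((1 : W).toList).rotate n = (1 : W).toList
      rw [FreeMonoid.toList_one, List.rotate_nil]
    · apply rep_eq_of_fixed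
      intro n
      apply FreeMonoid.toList.injective
      rw [toList_rotWord]
      show ((FreeMonoid.of i ^ a.1).toList).rotate n = _
      rw [toList_of_pow, List.rotate_replicate, ← toList_of_pow]
    · have hns : ∃ n, rotWord n (wordOf L) ≠ wordOf L := by
        by_contra hcon
        push_neg at hcon
        obtain ⟨x, hx⟩ := eq_replicate_of_all_rot_fixed hcon
        have h0 := (mem_toList_wordOf hLstd).1
        have h1 := (mem_toList_wordOf hLstd).2
        rw [hx] at h0 h1
        have e0 := List.eq_of_mem_replicate h0
        have e1 := List.eq_of_mem_replicate h1
        rw [← e0] at e1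
        exact one_ne_zero e1
      exact (rep_unique hS_rep hns ⟨hLS, sameOrbit_refl _⟩).symm
  -- triangularity for Φ ∘ Ξ
  have hldPhi : ∀ z, IsLead (Phi hS_rep (Xi z)) (wt z) (ct z) := by
    intro z
    obtain ⟨y, hy, hylt⟩ := hld z
    refine ⟨Phi hS_rep y, ?_, ?_⟩
    · rw [hy, map_add, Phi_single, hrepfix z]
    · intro v hv
      by_contra hne
      have hvsupp : v ∈ (Phi hS_rep y).coeff.support := Finsupp.mem_support_iff.mpr hne
      have : v ∈ y.coeff.support.image (rep S hS_rep) :=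
        Finsupp.mapDomain_support (by rwa [Phi, MonoidAlgebra.coeff_mapDomainLinearMap] at hvsupp)
      obtain ⟨u, hu, huv⟩ := Finset.mem_image.mp this
      have hlu : u.length < (wt z).length := mem_support_len hylt hu
      have : v.length = u.length := by rw [← huv, length_rep]
      omega
  refine ⟨tri Xi wt ct hinj hct hld, ?_, ?_⟩
  · -- sup = ⊤
    rw [eq_top_iff]
    intro x _
    have main : ∀ n : ℕ, ∀ w : W, w.length < n → ∀ c : ℂ,
        single w c ∈ commutatorSubspace ⊔ Submodule.span ℂ (Set.range Xi) := by
      intro n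
      induction n with
      | zero => intro w hw; omega
      | succ n IH =>
          intro w hw c
          -- find the index z whose word is `rep w`
          have hz : ∃ z, rep S hS_rep w = wt z := by
            by_cases h : ∃ k, rotWord k w ≠ w
            · obtain ⟨L, hLstd, hLw⟩ := hS_std _ (rep_spec hS_rep h).1
              refine ⟨Sum.inr (Sum.inr ⟨L, hLstd, ?_⟩), ?_⟩
              · rw [hLw]; exact (rep_spec hS_rep h).1
              · exact hLw.symm
            · push_neg at h
              obtain ⟨x', hx⟩ := eq_replicate_of_all_rot_fixed h
              rcases Nat.eq_zero_or_pos w.length with h0 | h0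
              · refine ⟨Sum.inl (), ?_⟩
                rw [rep_eq_of_fixed hS_rep h]
                apply FreeMonoid.toList.injective
                show w.toList = (1 : W).toList
                rw [FreeMonoid.toList_one]
                exact List.length_eq_zero_iff.mp h0
              · refine ⟨Sum.inr (Sum.inl (⟨w.length, h0⟩, x')), ?_⟩
                rw [rep_eq_of_fixed hS_rep h]
                apply FreeMonoid.toList.injective
                show w.toList = (FreeMonoid.of x' ^ w.length).toList
                rw [toList_of_pow]
                exact hx
          obtain ⟨z, hz⟩ := hz
          have hsplit : single w c = (single w c - single (rep S hS_rep w) c) +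
              single (rep S hS_rep w) c := by abel
          rw [hsplit]
          apply Submodule.add_mem
          · apply Submodule.mem_sup_left
            obtain ⟨k, hk⟩ := sameOrbit_rep hS_rep w
            rw [← hk]
            exact single_sub_rot_mem k w c
          · -- single (wt z) c ∈ K
            rw [hz]
            obtain ⟨y, hy, hylt⟩ := hld z
            have hlen : (wt z).length = w.length := by
              rw [← hz, length_rep]
            have hXiK : Xi z ∈ commutatorSubspace ⊔ Submodule.span ℂ (Set.range Xi) := by
              apply Submodule.mem_sup_right
              exact Submodule.subset_span (Set.mem_range_self z)
            have hyK : y ∈ commutatorSubspace ⊔ Submodule.span ℂ (Set.range Xi) := by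
              rw [← MonoidAlgebra.sum_coeff_single y]
              apply Submodule.finsuppSum_mem
              intro v hv
              have hvlen : v.length < (wt z).length :=
                mem_support_len hylt (Finsupp.mem_support_iff.mpr hv)
              exact IH v (by omega) (y.coeff v)
            have heq : single (wt z) c = (c * (ct z)⁻¹) • (Xi z - y) := by
              rw [hy, add_sub_cancel_right, MonoidAlgebra.smul_single']
              congr 1
              field_simp [hct z]
            rw [heq]
            exact Submodule.smul_mem _ _ (Submodule.sub_mem _ hXiK hyK)
    rw [← MonoidAlgebra.sum_coeff_single x]
    apply Submodule.finsuppSum_mem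
    intro w hw
    exact main (w.length + 1) w (Nat.lt_succ_self _) (x.coeff w)
  · -- inf = ⊥
    rw [eq_bot_iff]
    rintro x ⟨hxI, hxJ⟩
    obtain ⟨a, ha⟩ := Finsupp.mem_span_range_iff_exists_finsupp.mp hxJ
    have hPhix : Phi hS_rep x = 0 := I_le_ker hS_rep hxI
    have hsum : (a.sum fun z r => r • Phi hS_rep (Xi z)) = 0 := by
      have hc := congrArg (Phi hS_rep) ha
      rw [map_finsuppSum] at hc
      simp only [map_smul] at hc
      rw [hPhix] at hc
      exact hc
    have hli : LinearIndependent ℂ (fun z => Phi hS_rep (Xi z)) :=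
      tri _ wt ct hinj hct hldPhi
    have ha0 : a = 0 := by
      apply linearIndependent_iff.mp hli
      rw [Finsupp.linearCombination_apply]
      exact hsum
    rw [Submodule.mem_bot, ← ha, ha0, Finsupp.sum_zero_index]

end
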